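/- (Positivity improving) Let (V,b,c) be a connected weighted graph and L the generator of the associated regular Dirichlet form on ℓ²(V,m). Then the resolvent (L+α)^{-1} for α>0 maps non-negative nontrivial ℓ²-functions to strictly positive functions. -/
import Mathlib


/-- The formal Laplacian `L̃u(x) = (1/m(x)) ∑_y b(x,y)(u(x)-u(y)) + (c(x)/m(x))u(x)`. -/
noncomputable def formalL {V : Type*} (b : V → V → ℝ) (c m : V → ℝ) (u : V → ℝ) (x : V) : ℝ :=
  (1 / m x) * ∑' y, b x y * (u x - u y) + (c x / m x) * u x

/-- **Positivity improving.** Let `(V,b,c)` be a connected weighted graph.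
The resolvent `u = (L+α)⁻¹ f` (for `α > 0`) is a non-negative `ℓ²`-function solving
`(L̃+α)u = f` (these are the properties of the resolvent of the associated regular
Dirichlet form). If `f ≥ 0` is nontrivial then `u` is strictly positive. -/
theorem resolvent_positivity_improving
    (V : Type*) [Countable V] (m : V → ℝ) (hm : ∀ x, 0 < m x)
    (b : V → V → ℝ) (c : V → ℝ)
    (hb_symm : ∀ x y, b x y = b y x) (hb_nonneg : ∀ x y, 0 ≤ b x y)
    (hb_diag : ∀ x, b x x = 0) (hb_sum : ∀ x, Summable fun y => b x y)
    (hc : ∀ x, 0 ≤ c x)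
    (hconn : ∀ x y : V, Relation.ReflTransGen (fun a a' => 0 < b a a') x y)
    (α : ℝ) (hα : 0 < α)
    (f : V → ℝ) (hf_l2 : Summable fun x => m x * f x ^ 2)
    (hf_nonneg : ∀ x, 0 ≤ f x) (hf_ne : ∃ x, f x ≠ 0)
    (u : V → ℝ)
    -- u = (L+α)⁻¹ f : non-negative (positivity preserving), in ℓ², solves (L̃+α)u = f
    (hu_l2 : Summable fun x => m x * u x ^ 2)
    (hu_nonneg : ∀ x, 0 ≤ u x)
    (hu_dom : ∀ x, Summable fun y => b x y * |u y|)
    (hu_eq : ∀ x, formalL b c m u x + α * u x = f x) :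
    ∀ x, 0 < u x := by
  -- key: if u vanishes at a, it vanishes at all neighbors
  have key : ∀ a, u a = 0 → ∀ z, b a z * u z = 0 := by
    intro a ha z
    have hsum : Summable fun z => b a z * u z := by
      have := hu_dom a
      simpa [abs_of_nonneg (hu_nonneg _)] using this
    have heq := hu_eq a
    rw [formalL, ha] at heq
    simp only [zero_sub, mul_neg, mul_zero, add_zero] at heq
    rw [tsum_neg] at heq
    have hS0 : 0 ≤ ∑' z, b a z * u z :=
      tsum_nonneg fun z => mul_nonneg (hb_nonneg a z) (hu_nonneg z)
    have hfa : 0 ≤ f a := hf_nonneg a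
    have hma : 0 < 1 / m a := one_div_pos.mpr (hm a)
    have hSle : ∑' z, b a z * u z ≤ 0 := by nlinarith [heq]
    have hS : ∑' z, b a z * u z = 0 := le_antisymm hSle hS0
    have hle : b a z * u z ≤ ∑' z, b a z * u z :=
      Summable.le_tsum hsum z fun z' _ => mul_nonneg (hb_nonneg a z') (hu_nonneg z')
    have := mul_nonneg (hb_nonneg a z) (hu_nonneg z)
    linarith [hle, hS.le, hS.ge]
  by_contra hcon
  push_neg at hcon
  obtain ⟨x, hx⟩ := hcon
  have hx0 : u x = 0 := le_antisymm hx (hu_nonneg x)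
  have hall : ∀ y, u y = 0 := by
    intro y
    have h := hconn x y
    induction h with
    | refl => exact hx0
    | @tail p q _h hedge ih =>
      have := key _ ih q
      rcases mul_eq_zero.mp this with h1 | h2
      · exact absurd h1 (ne_of_gt hedge)
      · exact h2
  obtain ⟨z, hz⟩ := hf_ne
  apply hz
  have heq := hu_eq z
  simp [formalL, hall] at heq
  linarith
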